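/- arXiv:1610.07575 — 2 statements merged into one kernel-verified Lean document; each statement's English description precedes it below -/
import Mathlib

section
/- For any two facets F_i, F_j of a Pogorelov polytope P with F_i ∩ F_j = ∅, there exists a vertex of P lying in neither F_i nor F_j. -/
/-- A combinatorial model of a simple 3-polytope: `m` facets, each given by
its (finite) set of vertices; every vertex lies in exactly three facets, two
distinct facets meet in an edge (two vertices) or not at all. -/
structure SimplePolytope3 (m : ℕ) (V : Type) [Fintype V] [DecidableEq V] where
  facet : Fin m → Finset V
  facet_card : ∀ i, 3 ≤ (facet i).card
  vertex_in_three : ∀ v : V, (Finset.univ.filter (fun i => v ∈ facet i)).card = 3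
  inter_edge : ∀ i j, i ≠ j → facet i ∩ facet j = ∅ ∨ (facet i ∩ facet j).card = 2
  four_le_m : 4 ≤ m

namespace SimplePolytope3

variable {m : ℕ} {V : Type} [Fintype V] [DecidableEq V] (P : SimplePolytope3 m V)

/-- Two facets are adjacent if they are distinct and intersect. -/
def Adjacent (i j : Fin m) : Prop := i ≠ j ∧ (P.facet i ∩ P.facet j).Nonempty

/-- A `k`-belt: a cyclic sequence of `k ≥ 3` pairwise distinct facets such that
consecutive facets (cyclically) are adjacent, non-consecutive ones are disjoint,
and no three of them share a common vertex. -/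
def IsBelt (k : ℕ) (b : ZMod k → Fin m) : Prop :=
  3 ≤ k ∧ Function.Injective b ∧
  (∀ s t : ZMod k, s ≠ t →
    ((P.facet (b s) ∩ P.facet (b t)).Nonempty ↔ (t = s + 1 ∨ s = t + 1))) ∧
  (∀ s t u : ZMod k, s ≠ t → t ≠ u → s ≠ u →
    P.facet (b s) ∩ P.facet (b t) ∩ P.facet (b u) = ∅)

/-- A simple polytope is flag if every nonempty collection of pairwise
intersecting facets has a common vertex. -/
def Flag : Prop :=
  ∀ S : Finset (Fin m), S.Nonempty →
    (∀ i ∈ S, ∀ j ∈ S, (P.facet i ∩ P.facet j).Nonempty) →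
    ∃ v, ∀ i ∈ S, v ∈ P.facet i

/-- A Pogorelov polytope: a simple 3-polytope different from the simplex
(equivalently, with at least 5 facets) having no 3-belts and no 4-belts. -/
def Pogorelov : Prop :=
  5 ≤ m ∧ (¬ ∃ b : ZMod 3 → Fin m, P.IsBelt 3 b) ∧ (¬ ∃ b : ZMod 4 → Fin m, P.IsBelt 4 b)

end SimplePolytope3

private lemma tri_key {V : Type} [DecidableEq V] {A B C : Finset V}
    (h : A ∩ B = ∅ ∨ A ∩ C = ∅ ∨ B ∩ C = ∅) : A ∩ B ∩ C = ∅ := by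
  apply Finset.eq_empty_of_forall_notMem
  intro v hv
  simp only [Finset.mem_inter] at hv
  obtain ⟨⟨ha, hb⟩, hc⟩ := hv
  have key : ∀ {X Y : Finset V}, X ∩ Y = ∅ → v ∈ X → v ∈ Y → False := by
    intro X Y hXY hx hy
    exact Finset.eq_empty_iff_forall_notMem.mp hXY v (Finset.mem_inter.mpr ⟨hx, hy⟩)
  rcases h with h | h | h
  exacts [key h ha hb, key h ha hc, key h hb hc]

open SimplePolytope3 in
/-- For any two disjoint facets of a Pogorelov polytope, there exists a vertex
of the polytope lying in neither facet. -/
theorem pogorelov_vertex_outside_two_disjoint_facets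
    {m : ℕ} {V : Type} [Fintype V] [DecidableEq V]
    (P : SimplePolytope3 m V) (hP : P.Pogorelov)
    (i j : Fin m) (hdisj : P.facet i ∩ P.facet j = ∅) :
    ∃ v : V, v ∉ P.facet i ∧ v ∉ P.facet j := by
  by_contra h
  push_neg at h
  have cover : ∀ v : V, v ∈ P.facet i ∨ v ∈ P.facet j := by
    intro v
    by_cases hv : v ∈ P.facet i
    · exact Or.inl hv
    · exact Or.inr (h v hv)
  have hij : i ≠ j := by
    rintro rfl
    rw [Finset.inter_self] at hdisj
    have := P.facet_card i
    simp [hdisj] at this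
  have hji : P.facet j ∩ P.facet i = ∅ := by rw [Finset.inter_comm]; exact hdisj
  -- every other facet meets both F_i and F_j
  have meets : ∀ k : Fin m, k ≠ i → k ≠ j →
      (P.facet k ∩ P.facet i).Nonempty ∧ (P.facet k ∩ P.facet j).Nonempty := by
    intro k hki hkj
    have aux : ∀ a b : Fin m, a ≠ b → k ≠ a → k ≠ b →
        (∀ v : V, v ∈ P.facet a ∨ v ∈ P.facet b) →
        (P.facet k ∩ P.facet a).Nonempty := by
      intro a b hab hka hkb hcov
      rcases P.inter_edge k a hka with he | hc
      · exfalso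
        have hsub : P.facet k ⊆ P.facet b := by
          intro v hv
          rcases hcov v with hva | hvb
          · exact absurd (Finset.mem_inter.mpr ⟨hv, hva⟩)
              (by simp [he])
          · exact hvb
        have heq : P.facet k ∩ P.facet b = P.facet k := Finset.inter_eq_left.mpr hsub
        have hk3 := P.facet_card k
        rcases P.inter_edge k b hkb with he2 | hc2
        · rw [heq] at he2; simp [he2] at hk3
        · rw [heq] at hc2; omega
      · exact Finset.card_pos.mp (by omega)
    refine ⟨aux i j hij hki hkj cover, aux j i (Ne.symm hij) hkj hki ?_⟩
    intro v; exact (cover v).symm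
  -- no vertex lies in three facets different from i and j
  have no_triple : ∀ k l n : Fin m, k ≠ i → k ≠ j → l ≠ i → l ≠ j → n ≠ i → n ≠ j →
      k ≠ l → k ≠ n → l ≠ n → P.facet k ∩ P.facet l ∩ P.facet n = ∅ := by
    intro k l n hki hkj hli hlj hni hnj hkl hkn hln
    apply Finset.eq_empty_of_forall_notMem
    intro v hv
    simp only [Finset.mem_inter] at hv
    obtain ⟨⟨hvk, hvl⟩, hvn⟩ := hv
    have main : ∀ x : Fin m, v ∈ P.facet x → x ≠ k → x ≠ l → x ≠ n → False := by
      intro x hvx hxk hxl hxn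
      have hsub : ({x, k, l, n} : Finset (Fin m)) ⊆
          Finset.univ.filter (fun i => v ∈ P.facet i) := by
        intro y hy
        simp only [Finset.mem_insert, Finset.mem_singleton] at hy
        rcases hy with rfl | rfl | rfl | rfl <;>
          simp [hvx, hvk, hvl, hvn]
      have hc : ({x, k, l, n} : Finset (Fin m)).card = 4 := by
        rw [Finset.card_insert_of_notMem (by simp [hxk, hxl, hxn]),
            Finset.card_insert_of_notMem (by simp [hkl, hkn]),
            Finset.card_insert_of_notMem (by simp [hln]),
            Finset.card_singleton]
      have hle := Finset.card_le_card hsub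
      rw [hc, P.vertex_in_three v] at hle
      omega
    rcases cover v with hvi | hvj
    · exact main i hvi (Ne.symm hki) (Ne.symm hli) (Ne.symm hni)
    · exact main j hvj (Ne.symm hkj) (Ne.symm hlj) (Ne.symm hnj)
  by_cases hex : ∃ k l : Fin m, k ≠ i ∧ k ≠ j ∧ l ≠ i ∧ l ≠ j ∧ k ≠ l ∧
      P.facet k ∩ P.facet l = ∅
  · -- 4-belt (i, k, j, l)
    obtain ⟨k, l, hki, hkj, hli, hlj, hkl, hkldisj⟩ := hex
    have hlk : P.facet l ∩ P.facet k = ∅ := by rw [Finset.inter_comm]; exact hkldisj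
    obtain ⟨hik, hjk⟩ := meets k hki hkj
    obtain ⟨hil, hjl⟩ := meets l hli hlj
    have hik' : (P.facet i ∩ P.facet k).Nonempty := by rwa [Finset.inter_comm] at hik
    have hjk' : (P.facet j ∩ P.facet k).Nonempty := by rwa [Finset.inter_comm] at hjk
    have hil' : (P.facet i ∩ P.facet l).Nonempty := by rwa [Finset.inter_comm] at hil
    have hjl' : (P.facet j ∩ P.facet l).Nonempty := by rwa [Finset.inter_comm] at hjl
    have hijne : ¬ (P.facet i ∩ P.facet j).Nonempty := by simp [hdisj]
    have hjine : ¬ (P.facet j ∩ P.facet i).Nonempty := by simp [hji]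
    have hklne : ¬ (P.facet k ∩ P.facet l).Nonempty := by simp [hkldisj]
    have hlkne : ¬ (P.facet l ∩ P.facet k).Nonempty := by simp [hlk]
    set b : ZMod 4 → Fin m := fun s => if s = 0 then i else if s = 1 then k
      else if s = 2 then j else l with hb
    have hb0 : b 0 = i := rfl
    have hb1 : b 1 = k := rfl
    have hb2 : b 2 = j := rfl
    have hb3 : b 3 = l := rfl
    have hs4 : ∀ s : ZMod 4, s = 0 ∨ s = 1 ∨ s = 2 ∨ s = 3 := by decide
    apply hP.2.2
    refine ⟨b, by norm_num, ?_, ?_, ?_⟩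
    · intro s t hbst
      rcases hs4 s with rfl | rfl | rfl | rfl <;> rcases hs4 t with rfl | rfl | rfl | rfl <;>
        simp only [hb0, hb1, hb2, hb3] at hbst <;>
        first
          | rfl
          | (exfalso; first
              | exact hki hbst.symm | exact hki hbst | exact hkj hbst.symm | exact hkj hbst
              | exact hli hbst.symm | exact hli hbst | exact hlj hbst.symm | exact hlj hbst
              | exact hij hbst | exact hij hbst.symm | exact hkl hbst | exact hkl hbst.symm)
    · intro s t hst
      rcases hs4 s with rfl | rfl | rfl | rfl <;> rcases hs4 t with rfl | rfl | rfl | rfl <;>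
        first
          | exact absurd rfl hst
          | (simp only [hb0, hb1, hb2, hb3]
             first
               | exact iff_of_true (by assumption) (by decide)
               | exact iff_of_false (by assumption) (by decide))
    · intro s t u hst htu hsu
      rcases hs4 s with rfl | rfl | rfl | rfl <;> rcases hs4 t with rfl | rfl | rfl | rfl <;>
        rcases hs4 u with rfl | rfl | rfl | rfl <;>
        first
          | exact absurd rfl hst
          | exact absurd rfl htu
          | exact absurd rfl hsu
          | (simp only [hb0, hb1, hb2, hb3]
             refine tri_key ?_
             first
               | exact Or.inl hdisj | exact Or.inl hji | exact Or.inl hkldisj | exact Or.inl hlk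
               | exact Or.inr (Or.inl hdisj) | exact Or.inr (Or.inl hji)
               | exact Or.inr (Or.inl hkldisj) | exact Or.inr (Or.inl hlk)
               | exact Or.inr (Or.inr hdisj) | exact Or.inr (Or.inr hji)
               | exact Or.inr (Or.inr hkldisj) | exact Or.inr (Or.inr hlk))
  · -- all other facets pairwise intersect: 3-belt
    push_neg at hex
    obtain ⟨hm5, hno3, _⟩ := hP
    -- get three distinct facets different from i and j
    have hcard : 3 ≤ (Finset.univ \ {i, j} : Finset (Fin m)).card := by
      rw [Finset.card_sdiff_of_subset (Finset.subset_univ _), Finset.card_univ, Fintype.card_fin]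
      have : ({i, j} : Finset (Fin m)).card ≤ 2 := (Finset.card_insert_le _ _).trans (by simp)
      omega
    obtain ⟨T, hTsub, hTcard⟩ := Finset.exists_subset_card_eq hcard
    obtain ⟨k, l, n, hkl, hkn, hln, rfl⟩ := Finset.card_eq_three.mp hTcard
    have hmem : ∀ x ∈ ({k, l, n} : Finset (Fin m)), x ≠ i ∧ x ≠ j := by
      intro x hx
      have := hTsub hx
      simp only [Finset.mem_sdiff, Finset.mem_insert, Finset.mem_singleton] at this
      exact ⟨fun h' => this.2 (Or.inl h'), fun h' => this.2 (Or.inr h')⟩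
    obtain ⟨hki, hkj⟩ := hmem k (by simp)
    obtain ⟨hli, hlj⟩ := hmem l (by simp)
    obtain ⟨hni, hnj⟩ := hmem n (by simp)
    have pairs : ∀ a b : Fin m, a ≠ i → a ≠ j → b ≠ i → b ≠ j → a ≠ b →
        (P.facet a ∩ P.facet b).Nonempty := by
      intro a b hai haj hbi hbj hab
      rcases P.inter_edge a b hab with he | hc
      · exact absurd he (Finset.nonempty_iff_ne_empty.mp (hex a b hai haj hbi hbj hab))
      · exact Finset.card_pos.mp (by omega)
    have hKL := pairs k l hki hkj hli hlj hkl
    have hLK := pairs l k hli hlj hki hkj (Ne.symm hkl)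
    have hKN := pairs k n hki hkj hni hnj hkn
    have hNK := pairs n k hni hnj hki hkj (Ne.symm hkn)
    have hLN := pairs l n hli hlj hni hnj hln
    have hNL := pairs n l hni hnj hli hlj (Ne.symm hln)
    set b : ZMod 3 → Fin m := fun s => if s = 0 then k else if s = 1 then l else n with hb
    have hb0 : b 0 = k := rfl
    have hb1 : b 1 = l := rfl
    have hb2 : b 2 = n := rfl
    have hs3 : ∀ s : ZMod 3, s = 0 ∨ s = 1 ∨ s = 2 := by decide
    apply hno3
    refine ⟨b, le_refl 3, ?_, ?_, ?_⟩
    · intro s t hbst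
      rcases hs3 s with rfl | rfl | rfl <;> rcases hs3 t with rfl | rfl | rfl <;>
        simp only [hb0, hb1, hb2] at hbst <;>
        first
          | rfl
          | (exfalso; first
              | exact hkl hbst | exact hkl hbst.symm
              | exact hkn hbst | exact hkn hbst.symm
              | exact hln hbst | exact hln hbst.symm)
    · intro s t hst
      rcases hs3 s with rfl | rfl | rfl <;> rcases hs3 t with rfl | rfl | rfl <;>
        first
          | exact absurd rfl hst
          | (simp only [hb0, hb1, hb2]
             exact iff_of_true (by assumption) (by decide))
    · intro s t u hst htu hsu
      rcases hs3 s with rfl | rfl | rfl <;> rcases hs3 t with rfl | rfl | rfl <;>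
        rcases hs3 u with rfl | rfl | rfl <;>
        first
          | exact absurd rfl hst
          | exact absurd rfl htu
          | exact absurd rfl hsu
          | (simp only [hb0, hb1, hb2]
             first
               | exact no_triple k l n hki hkj hli hlj hni hnj hkl hkn hln
               | exact no_triple k n l hki hkj hni hnj hli hlj hkn hkl (Ne.symm hln)
               | exact no_triple l k n hli hlj hki hkj hni hnj (Ne.symm hkl) hln hkn
               | exact no_triple l n k hli hlj hni hnj hki hkj hln (Ne.symm hkl) (Ne.symm hkn)
               | exact no_triple n k l hni hnj hki hkj hli hlj (Ne.symm hkn) (Ne.symm hln) hkl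
               | exact no_triple n l k hni hnj hli hlj hki hkj (Ne.symm hln) (Ne.symm hkn) (Ne.symm hkl))
end

section
/- In a flag simple 3-polytope, for every facet F_i there exists a facet F_j disjoint from F_i. -/
open SimplePolytope3 in
/-- In a flag simple 3-polytope, for every facet there exists a facet disjoint
from it. -/
theorem flag_exists_disjoint_facet
    {m : ℕ} {V : Type} [Fintype V] [DecidableEq V]
    (P : SimplePolytope3 m V) (hflag : P.Flag) :
    ∀ i : Fin m, ∃ j : Fin m, i ≠ j ∧ P.facet i ∩ P.facet j = ∅ := by
  intro i
  by_contra hcon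
  push_neg at hcon
  have hmeet : ∀ j : Fin m, i ≠ j → (P.facet i ∩ P.facet j).Nonempty := by
    intro j hj
    exact hcon j hj
  by_cases hw : ∃ w : V, w ∉ P.facet i
  · obtain ⟨w, hwi⟩ := hw
    set T : Finset (Fin m) := Finset.univ.filter (fun k => w ∈ P.facet k) with hT
    have hTcard : T.card = 3 := P.vertex_in_three w
    have hiT : i ∉ T := by
      simp only [hT, Finset.mem_filter]
      tauto
    set S : Finset (Fin m) := insert i T with hS
    have hScard : S.card = 4 := by
      rw [hS, Finset.card_insert_of_notMem hiT, hTcard]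
    have hSne : S.Nonempty := ⟨i, Finset.mem_insert_self i T⟩
    have hpair : ∀ a ∈ S, ∀ b ∈ S, (P.facet a ∩ P.facet b).Nonempty := by
      intro a ha b hb
      rcases eq_or_ne a b with rfl | hab
      · rw [Finset.inter_self]
        exact Finset.card_pos.mp (lt_of_lt_of_le (by norm_num) (P.facet_card a))
      · rcases Finset.mem_insert.mp ha with rfl | haT
        · rcases Finset.mem_insert.mp hb with rfl | hbT
          · exact absurd rfl hab
          · exact hmeet b (by rintro rfl; exact hiT hbT)
        · rcases Finset.mem_insert.mp hb with rfl | hbT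
          · obtain ⟨v, hv⟩ := hmeet a (by rintro rfl; exact hiT haT)
            exact ⟨v, Finset.mem_inter.mpr ⟨(Finset.mem_inter.mp hv).2,
              (Finset.mem_inter.mp hv).1⟩⟩
          · refine ⟨w, Finset.mem_inter.mpr ⟨?_, ?_⟩⟩
            · exact (Finset.mem_filter.mp haT).2
            · exact (Finset.mem_filter.mp hbT).2
    obtain ⟨v, hv⟩ := hflag S hSne hpair
    have hsub : S ⊆ Finset.univ.filter (fun k => v ∈ P.facet k) := by
      intro a ha
      exact Finset.mem_filter.mpr ⟨Finset.mem_univ a, hv a ha⟩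
    have := Finset.card_le_card hsub
    rw [hScard, P.vertex_in_three v] at this
    omega
  · push_neg at hw
    have hj : ∃ j : Fin m, j ≠ i :=
      Fintype.exists_ne_of_one_lt_card
        (by rw [Fintype.card_fin]; have := P.four_le_m; omega) i
    obtain ⟨j, hji⟩ := hj
    have hsub : P.facet j ⊆ P.facet i := fun v _ => hw v
    have heq : P.facet i ∩ P.facet j = P.facet j := by
      rw [Finset.inter_eq_right]; exact hsub
    rcases P.inter_edge i j hji.symm with h0 | h2
    · rw [heq] at h0
      have := P.facet_card j
      rw [h0] at this
      simp at this
    · rw [heq] at h2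
      have := P.facet_card j
      omega
end
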